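/- Let J be a Jacobi operator on a one-ended levelled tree Γ whose coefficients along some infinite path {x_n} (with ℓ(x_n)=n) satisfy Σ_{n≥1} 1/λ_{x_n} = ∞. Then J, defined on finitely supported functions in ℓ²(Γ), is essentially self-adjoint. -/

import Mathlib

/-- A one-ended levelled tree: every vertex `x` has a unique upward neighbor
`parent x` (written `x'`) one level up, and a finite set `children x` of
downward neighbors one level down; the tree is connected with one end. -/
structure JTree where
  V : Type
  parent : V → V
  level : V → ℕ
  level_parent : ∀ x, level (parent x) = level x + 1
  children : V → Finset V
  mem_children : ∀ x y : V, y ∈ children x ↔ parent y = x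
  connected : ∀ x y : V, ∃ k l : ℕ, parent^[k] x = parent^[l] y
  subtree_finite : ∀ x : V, {t : V | ∃ k : ℕ, parent^[k] t = x}.Finite

namespace JTree

variable (T : JTree)

/-- `T.descend t x` means `t` belongs to the finite subtree `Γ_x` below (and
including) the vertex `x`. -/
def descend (t x : T.V) : Prop := ∃ k : ℕ, T.parent^[k] t = x

/-- The Jacobi operator on the tree:
`(Jv)(x) = λ_x v(x') + β_x v(x) + Σ_{y ∈ N_x} λ_y v(y)`. -/
noncomputable def jacobi (lam beta : T.V → ℝ) (v : T.V → ℂ) (x : T.V) : ℂ :=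
  (lam x : ℂ) * v (T.parent x) + (beta x : ℂ) * v x +
    ∑ y ∈ T.children x, (lam y : ℂ) * v y

end JTree

/-- A densely defined symmetric operator is essentially self-adjoint iff the ranges
of `A ± i` are dense. We use this as the definition. -/
def EssSelfAdjoint {E : Type*} [NormedAddCommGroup E] [InnerProductSpace ℂ E]
    (A : E →ₗ.[ℂ] E) : Prop :=
  Dense (Set.range fun x : A.domain => A x + Complex.I • (x : E)) ∧
  Dense (Set.range fun x : A.domain => A x - Complex.I • (x : E))

namespace JTreeAux
open scoped ENNReal
variable (T : JTree)

lemma level_iterate (t : T.V) (k : ℕ) : T.level (T.parent^[k] t) = T.level t + k := by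
  induction k with
  | zero => simp
  | succ k ih => rw [Function.iterate_succ_apply', T.level_parent, ih]; omega

lemma not_descend_parent (r : T.V) : ¬ T.descend (T.parent r) r := by
  rintro ⟨k, hk⟩
  have := level_iterate T (T.parent r) k
  rw [hk, T.level_parent] at this
  omega

lemma ne_parent (t : T.V) : t ≠ T.parent t := by
  intro h
  have := T.level_parent t
  rw [← h] at this
  omega

lemma parent_parent_ne (t : T.V) : T.parent (T.parent t) ≠ t := by
  intro h
  have h1 := T.level_parent t
  have h2 := T.level_parent (T.parent t)
  rw [h] at h2
  omega

lemma descend_child {y t r : T.V} (hy : y ∈ T.children t) (h : T.descend t r) :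
    T.descend y r := by
  obtain ⟨k, hk⟩ := h
  exact ⟨k + 1, by rw [Function.iterate_succ_apply, (T.mem_children t y).mp hy, hk]⟩

lemma descend_parent {t r : T.V} (h : T.descend t r) (hne : t ≠ r) :
    T.descend (T.parent t) r := by
  obtain ⟨k, hk⟩ := h
  cases k with
  | zero => exact absurd hk hne
  | succ m => exact ⟨m, by rw [← Function.iterate_succ_apply]; exact hk⟩
end JTreeAux

namespace JTreeAux
open scoped ENNReal
variable (T : JTree)
open Finset

lemma biUnion_children [DecidableEq T.V] {r : T.V} {D : Finset T.V}
    (hD : ∀ t, t ∈ D ↔ T.descend t r) :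
    D.biUnion T.children = D.erase r := by
  ext y
  simp only [mem_biUnion, mem_erase]
  constructor
  · rintro ⟨t, htD, hyt⟩
    have hpar : T.parent y = t := (T.mem_children t y).mp hyt
    have hdt : T.descend t r := (hD t).mp htD
    have hyr : T.descend y r := descend_child T hyt hdt
    refine ⟨?_, (hD y).mpr hyr⟩
    rintro rfl
    exact not_descend_parent T y (hpar ▸ hdt)
  · rintro ⟨hne, hyD⟩
    refine ⟨T.parent y, ?_, (T.mem_children _ y).mpr rfl⟩
    exact (hD _).mpr (descend_parent T ((hD y).mp hyD) hne)

lemma sum_children_eq [DecidableEq T.V] {r : T.V} {D : Finset T.V}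
    (hD : ∀ t, t ∈ D ↔ T.descend t r) (F : T.V → ℂ) :
    ∑ t ∈ D, ∑ y ∈ T.children t, F y = ∑ y ∈ D.erase r, F y := by
  rw [← biUnion_children T hD, Finset.sum_biUnion]
  intro a _ b _ hab
  simp only [Finset.disjoint_left]
  intro y hya hyb
  exact hab (((T.mem_children a y).mp hya) ▸ (T.mem_children b y).mp hyb)

local notation "conj'" => starRingEnd ℂ

lemma green (lam beta : T.V → ℝ) (g : T.V → ℂ) (r : T.V)
    (D : Finset T.V) (hD : ∀ t, t ∈ D ↔ T.descend t r) :
    ∑ t ∈ D, (conj' (g t) * T.jacobi lam beta g t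
      - conj' (T.jacobi lam beta g t) * g t)
    = (lam r : ℂ) * (conj' (g r) * g (T.parent r)
      - conj' (g (T.parent r)) * g r) := by
  classical
  have hrD : r ∈ D := (hD r).mpr ⟨0, rfl⟩
  have H1 : ∑ t ∈ D, conj' (g t) * T.jacobi lam beta g t
      = (∑ t ∈ D, (lam t : ℂ) * (conj' (g t) * g (T.parent t)))
        + (∑ t ∈ D, (beta t : ℂ) * (conj' (g t) * g t))
        + ∑ t ∈ D.erase r, (lam t : ℂ) * (conj' (g (T.parent t)) * g t) := by
    rw [← sum_children_eq T hD (fun y => (lam y : ℂ) * (conj' (g (T.parent y)) * g y))]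
    rw [← Finset.sum_add_distrib, ← Finset.sum_add_distrib]
    refine Finset.sum_congr rfl fun t _ => ?_
    unfold JTree.jacobi
    have : ∑ y ∈ T.children t, conj' (g t) * ((lam y : ℂ) * g y)
        = ∑ y ∈ T.children t, (lam y : ℂ) * (conj' (g (T.parent y)) * g y) := by
      refine Finset.sum_congr rfl fun y hy => ?_
      rw [(T.mem_children t y).mp hy]; ring
    rw [mul_add, mul_add, Finset.mul_sum, this]; ring
  have H2 : ∑ t ∈ D, conj' (T.jacobi lam beta g t) * g t
      = (∑ t ∈ D, (lam t : ℂ) * (conj' (g (T.parent t)) * g t))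
        + (∑ t ∈ D, (beta t : ℂ) * (conj' (g t) * g t))
        + ∑ t ∈ D.erase r, (lam t : ℂ) * (conj' (g t) * g (T.parent t)) := by
    rw [← sum_children_eq T hD (fun y => (lam y : ℂ) * (conj' (g y) * g (T.parent y)))]
    rw [← Finset.sum_add_distrib, ← Finset.sum_add_distrib]
    refine Finset.sum_congr rfl fun t _ => ?_
    unfold JTree.jacobi
    simp only [map_add, map_mul, map_sum, Complex.conj_ofReal]
    have : ∑ y ∈ T.children t, (lam y : ℂ) * conj' (g y) * g t
        = ∑ y ∈ T.children t, (lam y : ℂ) * (conj' (g y) * g (T.parent y)) := by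
      refine Finset.sum_congr rfl fun y hy => ?_
      rw [(T.mem_children t y).mp hy]; ring
    rw [add_mul, add_mul, Finset.sum_mul, this]; ring
  rw [Finset.sum_sub_distrib, H1, H2,
      ← Finset.add_sum_erase D (fun t => (lam t : ℂ) * (conj' (g t) * g (T.parent t))) hrD,
      ← Finset.add_sum_erase D (fun t => (lam t : ℂ) * (conj' (g (T.parent t)) * g t)) hrD]
  ring

lemma green_im (lam beta : T.V → ℝ) (z : ℂ) (g : T.V → ℂ)
    (hg : ∀ t, T.jacobi lam beta g t = z * g t) (r : T.V)
    (D : Finset T.V) (hD : ∀ t, t ∈ D ↔ T.descend t r) :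
    z.im * ∑ t ∈ D, Complex.normSq (g t)
      = lam r * (conj' (g r) * g (T.parent r)).im := by
  have E := green T lam beta g r D hD
  have L : ∑ t ∈ D, (conj' (g t) * T.jacobi lam beta g t
      - conj' (T.jacobi lam beta g t) * g t)
      = (z - conj' z) * (∑ t ∈ D, (Complex.normSq (g t) : ℂ)) := by
    rw [Finset.mul_sum]
    refine Finset.sum_congr rfl fun t _ => ?_
    rw [hg t]
    have : (Complex.normSq (g t) : ℂ) = conj' (g t) * g t := (Complex.normSq_eq_conj_mul_self).symm ▸ rfl
    rw [map_mul]
    rw [Complex.normSq_eq_conj_mul_self]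
    ring
  rw [L] at E
  have hN : (∑ t ∈ D, (Complex.normSq (g t) : ℂ))
      = ((∑ t ∈ D, Complex.normSq (g t) : ℝ) : ℂ) := by push_cast; rfl
  rw [hN] at E
  have h2 := congrArg Complex.im E
  simp only [Complex.mul_im, Complex.sub_im, Complex.sub_re, Complex.conj_im,
    Complex.conj_re, Complex.ofReal_im, Complex.ofReal_re, Complex.mul_re] at h2 ⊢
  ring_nf at h2 ⊢
  linarith


lemma green_bound (lam beta : T.V → ℝ) (hlam : ∀ t, 0 < lam t) (z : ℂ)
    (hz : z.im = 1 ∨ z.im = -1) (g : T.V → ℂ)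
    (hg : ∀ t, T.jacobi lam beta g t = z * g t) (r : T.V)
    (D : Finset T.V) (hD : ∀ t, t ∈ D ↔ T.descend t r) :
    ∑ t ∈ D, Complex.normSq (g t)
      ≤ lam r * (‖g r‖ * ‖g (T.parent r)‖) := by
  have hgi := green_im T lam beta z g hg r D hD
  set w := conj' (g r) * g (T.parent r) with hwdef
  have habs : |w.im| ≤ ‖g r‖ * ‖g (T.parent r)‖ := by
    calc |w.im| ≤ ‖w‖ := Complex.abs_im_le_norm w
    _ = ‖g r‖ * ‖g (T.parent r)‖ := by
        rw [hwdef, norm_mul, Complex.norm_conj]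
  have hlr := (hlam r).le
  have h1 : lam r * w.im ≤ lam r * (‖g r‖ * ‖g (T.parent r)‖) :=
    mul_le_mul_of_nonneg_left ((le_abs_self _).trans habs) hlr
  have h2 : -(lam r * w.im) ≤ lam r * (‖g r‖ * ‖g (T.parent r)‖) := by
    rw [← mul_neg]
    exact mul_le_mul_of_nonneg_left ((neg_le_abs _).trans habs) hlr
  rcases hz with h | h <;> rw [h] at hgi <;> nlinarith [hgi]

lemma key_bound (lam beta : T.V → ℝ) (hlam : ∀ t, 0 < lam t) (z : ℂ)
    (hz : z.im = 1 ∨ z.im = -1) (g : T.V → ℂ)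
    (hg : ∀ t, T.jacobi lam beta g t = z * g t) {s r : T.V} (hs : T.descend s r) :
    Complex.normSq (g s)
      ≤ lam r * (‖g r‖ * ‖g (T.parent r)‖) := by
  classical
  set D : Finset T.V := (T.subtree_finite r).toFinset with hDdef
  have hD : ∀ t, t ∈ D ↔ T.descend t r := by
    intro t; rw [hDdef, Set.Finite.mem_toFinset]; rfl
  refine le_trans ?_ (green_bound T lam beta hlam z hz g hg r D hD)
  exact Finset.single_le_sum (fun t _ => Complex.normSq_nonneg (g t)) ((hD s).mpr hs)


lemma path_iter (x : ℕ → T.V) (hpath : ∀ n, x (n + 1) = T.parent (x n))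
    (n m : ℕ) : T.parent^[m] (x n) = x (n + m) := by
  induction m with
  | zero => rfl
  | succ m ih =>
    rw [Function.iterate_succ_apply', ih, ← hpath]
    rfl

lemma level_path (x : ℕ → T.V) (hpath : ∀ n, x (n + 1) = T.parent (x n))
    (hx0 : T.level (x 0) = 0) (n : ℕ) : T.level (x n) = n := by
  induction n with
  | zero => exact hx0
  | succ n ih => rw [hpath, T.level_parent, ih]

lemma path_inj (x : ℕ → T.V) (hpath : ∀ n, x (n + 1) = T.parent (x n))
    (hx0 : T.level (x 0) = 0) : Function.Injective x := by
  intro a b hab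
  have := level_path T x hpath hx0 a
  rw [hab, level_path T x hpath hx0 b] at this
  omega

lemma vanish (lam beta : T.V → ℝ) (hlam : ∀ t, 0 < lam t)
    (x : ℕ → T.V) (hpath : ∀ n, x (n + 1) = T.parent (x n))
    (hx0 : T.level (x 0) = 0)
    (hdiv : ¬ Summable (fun n : ℕ => (lam (x n))⁻¹))
    (z : ℂ) (hz : z.im = 1 ∨ z.im = -1)
    (g : lp (fun _ : T.V => ℂ) 2)
    (hg : ∀ t, T.jacobi lam beta (fun s => g s) t = z * g t) :
    g = 0 := by
  by_contra hne
  have hex : ∃ s : T.V, g s ≠ 0 := by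
    by_contra hall
    push_neg at hall
    exact hne (lp.ext (funext fun s => by simpa using hall s))
  obtain ⟨s, hs⟩ := hex
  set c := Complex.normSq (g s) with hc
  have hcpos : 0 < c := Complex.normSq_pos.mpr hs
  -- s descends to some x l
  obtain ⟨k, l, hkl⟩ := T.connected s (x 0)
  have hsl : T.descend s (x l) := by
    refine ⟨k, ?_⟩
    rw [hkl, path_iter T x hpath 0 l, Nat.zero_add]
  -- for n ≥ l, s descends to x n
  have hsn : ∀ n, T.descend s (x (n + l)) := by
    intro n
    obtain ⟨k', hk'⟩ := hsl
    refine ⟨n + k', ?_⟩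
    rw [Function.iterate_add_apply, hk', path_iter T x hpath l n, Nat.add_comm l n]
  -- the key inequality for n ≥ l
  have hkey : ∀ n : ℕ, c ≤ lam (x (n + l)) *
      (‖g (x (n + l))‖ * ‖g (x (n + l + 1))‖) := by
    intro n
    have := key_bound T lam beta hlam z hz (fun s => g s) hg (hsn n)
    rwa [← hpath (n + l)] at this
  -- summability of ‖g t‖ ^ 2
  have hsq : Summable (fun t : T.V => ‖g t‖ ^ 2) := by
    have h2 := (lp.memℓp g).summable (by norm_num)
    have : ((2 : ℝ≥0∞)).toReal = (2 : ℝ) := by norm_num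
    rw [this] at h2
    refine h2.congr fun t => ?_
    rw [show ((2:ℝ)) = ((2:ℕ):ℝ) by norm_num, Real.rpow_natCast]
  have hinj := path_inj T x hpath hx0
  have ha : Summable (fun n : ℕ => ‖g (x n)‖ ^ 2) := hsq.comp_injective hinj
  have hb : Summable (fun n : ℕ => ‖g (x (n + 1))‖ ^ 2) :=
    hsq.comp_injective (hinj.comp fun a b h => by omega)
  have hbig : Summable (fun n : ℕ =>
      (2 * c)⁻¹ * (‖g (x (n + l))‖ ^ 2 + ‖g (x (n + l + 1))‖ ^ 2)) := by
    refine Summable.mul_left _ ?_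
    refine Summable.add ?_ ?_
    · exact (summable_nat_add_iff (f := fun n : ℕ => ‖g (x n)‖ ^ 2) l).mpr ha
    · exact (summable_nat_add_iff (f := fun n : ℕ => ‖g (x (n + 1))‖ ^ 2) l).mpr hb
  have hcomp : Summable (fun n : ℕ => (lam (x (n + l)))⁻¹) := by
    refine Summable.of_nonneg_of_le (fun n => inv_nonneg.mpr (hlam _).le) (fun n => ?_) hbig
    have hk := hkey n
    set A := ‖g (x (n + l))‖ with hA
    set B := ‖g (x (n + l + 1))‖ with hB
    have hnA : ‖g (x (n + l))‖ = A := rfl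
    have hnB : ‖g (x (n + l + 1))‖ = B := rfl
    have hAB : A * B ≤ (A ^ 2 + B ^ 2) / 2 := by nlinarith [sq_nonneg (A - B)]
    have hlp := hlam (x (n + l))
    have h1 : c ≤ lam (x (n + l)) * ((A ^ 2 + B ^ 2) / 2) := by
      refine hk.trans ?_
      exact mul_le_mul_of_nonneg_left hAB hlp.le
    calc (lam (x (n + l)))⁻¹ = 1 / lam (x (n + l)) := (one_div _).symm
      _ ≤ (A ^ 2 + B ^ 2) / (2 * c) := by
          rw [div_le_div_iff₀ hlp (by positivity)]
          nlinarith [h1]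
      _ = (2 * c)⁻¹ * (A ^ 2 + B ^ 2) := by ring
  exact hdiv ((summable_nat_add_iff (f := fun n : ℕ => (lam (x n))⁻¹) l).mp hcomp)


lemma inner_eq_sum (u g : lp (fun _ : T.V => ℂ) 2) (F : Finset T.V)
    (hsupp : ∀ s, s ∉ F → u s = 0) :
    inner (𝕜 := ℂ) u g = ∑ s ∈ F, conj' (u s) * g s := by
  rw [lp.inner_eq_tsum]
  rw [tsum_eq_sum (s := F) (fun s hs => by rw [hsupp s hs]; simp)]
  exact Finset.sum_congr rfl fun s _ => by rw [RCLike.inner_apply, mul_comm]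

lemma jacobi_of_orthogonal (lam beta : T.V → ℝ)
    (A : lp (fun _ : T.V => ℂ) 2 →ₗ.[ℂ] lp (fun _ : T.V => ℂ) 2)
    (hdom : ∀ f : lp (fun _ : T.V => ℂ) 2,
      f ∈ A.domain ↔ {t : T.V | (f : ∀ _ : T.V, ℂ) t ≠ 0}.Finite)
    (hA : ∀ f : A.domain, ∀ t : T.V,
      ((A f : lp (fun _ : T.V => ℂ) 2) : ∀ _ : T.V, ℂ) t =
        T.jacobi lam beta (fun s => ((f : lp (fun _ : T.V => ℂ) 2) : ∀ _ : T.V, ℂ) s) t)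
    (c : ℂ) (g : lp (fun _ : T.V => ℂ) 2)
    (horth : ∀ f : A.domain,
      inner (𝕜 := ℂ) ((A f : lp (fun _ : T.V => ℂ) 2) + c • (f : lp (fun _ : T.V => ℂ) 2)) g = 0)
    (t : T.V) :
    T.jacobi lam beta (fun s => g s) t = (-(conj' c)) * g t := by
  classical
  set ft : lp (fun _ : T.V => ℂ) 2 := lp.single 2 t (1 : ℂ) with hft
  have hmem : ft ∈ A.domain := by
    rw [hdom]
    refine Set.Finite.subset (Set.finite_singleton t) ?_
    intro s hs
    simp only [Set.mem_setOf_eq] at hs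
    by_contra hst
    apply hs
    rw [hft]
    exact lp.single_apply_ne (E := fun _ : T.V => ℂ) 2 t (1 : ℂ) (by simpa using hst)
  set f : A.domain := ⟨ft, hmem⟩ with hf
  -- evaluations of ft
  have hft_self : ft t = 1 := by rw [hft]; exact lp.single_apply_self (E := fun _ : T.V => ℂ) 2 t (1 : ℂ)
  have hft_ne : ∀ s, s ≠ t → ft s = 0 := fun s hst => by
    rw [hft]; exact lp.single_apply_ne (E := fun _ : T.V => ℂ) 2 t (1 : ℂ) hst
  -- child sums
  have hchild : ∀ s : T.V, (∑ y ∈ T.children s, (lam y : ℂ) * ft y)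
      = if T.parent t = s then (lam t : ℂ) else 0 := by
    intro s
    by_cases hts : T.parent t = s
    · rw [if_pos hts]
      rw [Finset.sum_eq_single_of_mem t ((T.mem_children s t).mpr hts)
        (fun y _ hy => by rw [hft_ne y hy, mul_zero])]
      rw [hft_self, mul_one]
    · rw [if_neg hts]
      refine Finset.sum_eq_zero fun y hy => ?_
      have : y ≠ t := by
        rintro rfl
        exact hts ((T.mem_children s y).mp hy)
      rw [hft_ne y this, mul_zero]
  have hAf := hA f
  have hfcoe : ((f : lp (fun _ : T.V => ℂ) 2) : ∀ _ : T.V, ℂ) = (ft : ∀ _ : T.V, ℂ) := rfl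
  -- value of A f at various points
  have hval_t : ((A f : lp (fun _ : T.V => ℂ) 2) : ∀ _ : T.V, ℂ) t = (beta t : ℂ) := by
    rw [hAf t]
    unfold JTree.jacobi
    rw [hfcoe]
    beta_reduce
    rw [hft_ne (T.parent t) (Ne.symm (ne_parent T t)), hft_self, hchild t,
      if_neg (Ne.symm (ne_parent T t))]
    ring
  have hval_p : ((A f : lp (fun _ : T.V => ℂ) 2) : ∀ _ : T.V, ℂ) (T.parent t) = (lam t : ℂ) := by
    rw [hAf (T.parent t)]
    unfold JTree.jacobi
    rw [hfcoe]
    beta_reduce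
    rw [hft_ne (T.parent (T.parent t)) (parent_parent_ne T t),
      hft_ne (T.parent t) (Ne.symm (ne_parent T t)), hchild (T.parent t), if_pos rfl]
    ring
  have hval_c : ∀ s ∈ T.children t,
      ((A f : lp (fun _ : T.V => ℂ) 2) : ∀ _ : T.V, ℂ) s = (lam s : ℂ) := by
    intro s hsc
    have hps : T.parent s = t := (T.mem_children t s).mp hsc
    have hst : s ≠ t := by
      rintro rfl
      exact ne_parent T s hps.symm
    have hpts : T.parent t ≠ s := by
      intro h
      exact parent_parent_ne T t (by rw [← h] at hps; exact hps)
    rw [hAf s]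
    unfold JTree.jacobi
    rw [hfcoe]
    beta_reduce
    rw [hps, hft_self, hft_ne s hst, hchild s, if_neg hpts]
    ring
  have hval_out : ∀ s : T.V, s ∉ insert t (insert (T.parent t) (T.children t)) →
      ((A f : lp (fun _ : T.V => ℂ) 2) : ∀ _ : T.V, ℂ) s = 0 := by
    intro s hsF
    simp only [Finset.mem_insert] at hsF
    push_neg at hsF
    obtain ⟨hs1, hs2, hs3⟩ := hsF
    have hps : T.parent s ≠ t := fun h => hs3 ((T.mem_children t s).mpr h)
    have hpt : T.parent t ≠ s := fun h => hs2 h.symm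
    rw [hAf s]
    unfold JTree.jacobi
    rw [hfcoe]
    beta_reduce
    rw [hft_ne (T.parent s) hps, hft_ne s hs1, hchild s, if_neg hpt]
    ring
  -- the inner product computation
  have htni : t ∉ insert (T.parent t) (T.children t) := by
    simp only [Finset.mem_insert]
    push_neg
    exact ⟨ne_parent T t, fun h => ne_parent T t ((T.mem_children t t).mp h).symm⟩
  have hpni : T.parent t ∉ T.children t := by
    intro h
    exact parent_parent_ne T t ((T.mem_children t (T.parent t)).mp h)
  have hinnerA : inner (𝕜 := ℂ) (A f : lp (fun _ : T.V => ℂ) 2) g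
      = T.jacobi lam beta (fun s => g s) t := by
    rw [inner_eq_sum T (A f : lp (fun _ : T.V => ℂ) 2) g
      (insert t (insert (T.parent t) (T.children t))) hval_out]
    rw [Finset.sum_insert htni, Finset.sum_insert hpni]
    rw [hval_t, hval_p]
    have : ∑ s ∈ T.children t, conj' (((A f : lp (fun _ : T.V => ℂ) 2) : ∀ _ : T.V, ℂ) s) * g s
        = ∑ s ∈ T.children t, (lam s : ℂ) * g s := by
      refine Finset.sum_congr rfl fun s hs => ?_
      rw [hval_c s hs, Complex.conj_ofReal]
    rw [this]
    unfold JTree.jacobi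
    rw [Complex.conj_ofReal, Complex.conj_ofReal]
    ring
  have hinnerf : inner (𝕜 := ℂ) (ft : lp (fun _ : T.V => ℂ) 2) g = g t := by
    rw [hft, lp.inner_single_left, RCLike.inner_apply]
    simp
  have h0 := horth f
  rw [inner_add_left, inner_smul_left, hinnerA] at h0
  have : inner (𝕜 := ℂ) ((f : lp (fun _ : T.V => ℂ) 2)) g = g t := hinnerf
  rw [this] at h0
  linear_combination h0


noncomputable def phiMap (A : lp (fun _ : T.V => ℂ) 2 →ₗ.[ℂ] lp (fun _ : T.V => ℂ) 2)
    (c : ℂ) : A.domain →ₗ[ℂ] lp (fun _ : T.V => ℂ) 2 where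
  toFun f := (A f : lp (fun _ : T.V => ℂ) 2) + c • (f : lp (fun _ : T.V => ℂ) 2)
  map_add' a b := by
    rw [A.map_add, Submodule.coe_add, smul_add]
    abel
  map_smul' r a := by
    simp only [RingHom.id_apply]
    rw [A.map_smul, SetLike.val_smul, smul_smul, mul_comm, ← smul_smul, smul_add]

lemma dense_range_phi (lam beta : T.V → ℝ) (hlam : ∀ t, 0 < lam t)
    (x : ℕ → T.V) (hpath : ∀ n, x (n + 1) = T.parent (x n))
    (hx0 : T.level (x 0) = 0)
    (hdiv : ¬ Summable (fun n : ℕ => (lam (x n))⁻¹))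
    (A : lp (fun _ : T.V => ℂ) 2 →ₗ.[ℂ] lp (fun _ : T.V => ℂ) 2)
    (hdom : ∀ f : lp (fun _ : T.V => ℂ) 2,
      f ∈ A.domain ↔ {t : T.V | (f : ∀ _ : T.V, ℂ) t ≠ 0}.Finite)
    (hA : ∀ f : A.domain, ∀ t : T.V,
      ((A f : lp (fun _ : T.V => ℂ) 2) : ∀ _ : T.V, ℂ) t =
        T.jacobi lam beta (fun s => ((f : lp (fun _ : T.V => ℂ) 2) : ∀ _ : T.V, ℂ) s) t)
    (c : ℂ) (hc : c = Complex.I ∨ c = -Complex.I) :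
    Dense (Set.range fun f : A.domain =>
      (A f : lp (fun _ : T.V => ℂ) 2) + c • (f : lp (fun _ : T.V => ℂ) 2)) := by
  have hrange : (Set.range fun f : A.domain =>
      (A f : lp (fun _ : T.V => ℂ) 2) + c • (f : lp (fun _ : T.V => ℂ) 2))
      = (LinearMap.range (phiMap T A c) : Set (lp (fun _ : T.V => ℂ) 2)) := by
    rw [LinearMap.coe_range]
    rfl
  rw [hrange]
  rw [Submodule.dense_iff_topologicalClosure_eq_top, Submodule.topologicalClosure_eq_top_iff]
  rw [Submodule.eq_bot_iff]
  intro g hg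
  have horth : ∀ f : A.domain,
      inner (𝕜 := ℂ) ((A f : lp (fun _ : T.V => ℂ) 2) + c • (f : lp (fun _ : T.V => ℂ) 2)) g = 0 := by
    intro f
    exact (Submodule.mem_orthogonal _ g).mp hg _ ⟨f, rfl⟩
  have hjac := jacobi_of_orthogonal T lam beta A hdom hA c g horth
  have hzim : (-(starRingEnd ℂ c)).im = 1 ∨ (-(starRingEnd ℂ c)).im = -1 := by
    rcases hc with rfl | rfl <;> simp
  exact vanish T lam beta hlam x hpath hx0 hdiv (-(starRingEnd ℂ c)) hzim g hjac

end JTreeAux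

/-- Carleman-type criterion: if `Σ_n 1/λ_{x_n} = ∞` along some infinite path, then
the Jacobi operator `J`, defined on the finitely supported functions in `ℓ²(Γ)`,
is essentially self-adjoint. -/
theorem stmt_9 (T : JTree) (lam beta : T.V → ℝ) (hlam : ∀ t, 0 < lam t)
    (x : ℕ → T.V) (hpath : ∀ n, x (n + 1) = T.parent (x n))
    (hx0 : T.level (x 0) = 0)
    (hdiv : ¬ Summable (fun n : ℕ => (lam (x n))⁻¹))
    (A : lp (fun _ : T.V => ℂ) 2 →ₗ.[ℂ] lp (fun _ : T.V => ℂ) 2)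
    (hdom : ∀ f : lp (fun _ : T.V => ℂ) 2,
      f ∈ A.domain ↔ {t : T.V | (f : ∀ _ : T.V, ℂ) t ≠ 0}.Finite)
    (hA : ∀ f : A.domain, ∀ t : T.V,
      ((A f : lp (fun _ : T.V => ℂ) 2) : ∀ _ : T.V, ℂ) t =
        T.jacobi lam beta (fun s => ((f : lp (fun _ : T.V => ℂ) 2) : ∀ _ : T.V, ℂ) s) t) :
    EssSelfAdjoint A := by
  constructor
  · exact JTreeAux.dense_range_phi T lam beta hlam x hpath hx0 hdiv A hdom hA
      Complex.I (Or.inl rfl)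
  · have heq : (fun f : A.domain =>
        (A f : lp (fun _ : T.V => ℂ) 2) - Complex.I • (f : lp (fun _ : T.V => ℂ) 2))
        = fun f : A.domain =>
        (A f : lp (fun _ : T.V => ℂ) 2) + (-Complex.I) • (f : lp (fun _ : T.V => ℂ) 2) := by
      funext f
      rw [neg_smul, sub_eq_add_neg]
    rw [heq]
    exact JTreeAux.dense_range_phi T lam beta hlam x hpath hx0 hdiv A hdom hA
      (-Complex.I) (Or.inr rfl)
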